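/- Bound on Hadamard powers of correlations with the data (Lemma A.4). Under the data assumption with n ≤ C₀ d for an absolute constant C₀: there exist constants c, C > 0 such that for all sufficiently large d, with probability at least 1 − 2 exp(−c √d) over the data x_1, …, x_n, the following holds simultaneously for every x̂ ∈ ℝ^d with ‖x̂‖_2 = √d and every integer l ≥ 2: ‖ (X x̂)^{∘l} / d^l ‖_2 ≤ C₁^{l−1} + C d^{−0.1}, where X ∈ ℝ^{n×d} is the matrix with rows x_1, …, x_n, C₁ := max_{i ∈ [n]} |x_iᵀ x̂| / d, and (X x̂)^{∘l} ∈ ℝⁿ denotes the entrywise l-th power of the vector X x̂. -/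

import Mathlib

open MeasureTheory ProbabilityTheory Filter
open scoped ENNReal NNReal

noncomputable section

/-- Euclidean (ℓ²) norm of a vector in `Fin m → ℝ`. -/
def eNorm {m : ℕ} (x : Fin m → ℝ) : ℝ := Real.sqrt (∑ j, (x j) ^ 2)

/-- Euclidean dot product. -/
def dotp {m : ℕ} (u v : Fin m → ℝ) : ℝ := ∑ j, u j * v j

/-- The random-features map `x ↦ (φ(vₖᵀx))ₖ`, where `vₖ` is the `k`-th row of `V`. -/
def featureMap {p d : ℕ} (φ : ℝ → ℝ) (V : Fin p → Fin d → ℝ) (x : Fin d → ℝ) :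
    Fin p → ℝ := fun k => φ (dotp (V k) x)

/-- The `l`-th normalized probabilists' Hermite polynomial (orthonormal in `L²(N(0,1))`). -/
def hermiteFn (l : ℕ) (x : ℝ) : ℝ :=
  (Polynomial.aeval x (Polynomial.hermite l)) / Real.sqrt (Nat.factorial l)

/-- The `l`-th Hermite coefficient `μ_l` of `φ`. -/
def hermiteCoeff (φ : ℝ → ℝ) (l : ℕ) : ℝ :=
  ∫ g, φ g * hermiteFn l g ∂(gaussianReal 0 1)

/-- The nonlinear part of the feature map: `φ̃(x) = (φ(vₖᵀx) − μ₁ vₖᵀx)ₖ`. -/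
def tfeatureMap {p d : ℕ} (φ : ℝ → ℝ) (V : Fin p → Fin d → ℝ) (x : Fin d → ℝ) :
    Fin p → ℝ := fun k => φ (dotp (V k) x) - hermiteCoeff φ 1 * dotp (V k) x

/-- `μ̃² := Σ_{l ≥ 3} μ_l²`. -/
def tmu2 (φ : ℝ → ℝ) : ℝ := ∑' l : ℕ, if 3 ≤ l then (hermiteCoeff φ l) ^ 2 else 0

/-- The law of the random features matrix: i.i.d. entries `N(0, 1/d)`. -/
def gaussianMatrix (p d : ℕ) : Measure (Fin p → Fin d → ℝ) :=
  Measure.pi fun _ => Measure.pi fun _ => gaussianReal 0 ((d : NNReal))⁻¹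

/-- Sub-Gaussian norm of a distribution on `ℝ^d`:
`sup_{‖u‖₂ = 1} inf { t > 0 : E exp((uᵀx)²/t²) ≤ 2 }`. -/
def vecSubGNorm {d : ℕ} (P : Measure (Fin d → ℝ)) : ℝ :=
  ⨆ u : {u : Fin d → ℝ // eNorm u = 1},
    sInf {t : ℝ | 0 < t ∧ ∫ x, Real.exp ((dotp u.1 x) ^ 2 / t ^ 2) ∂P ≤ 2}

/-- Data assumption: `P` is a probability distribution on `ℝ^d` with `‖x‖₂ = √d` a.s.
and sub-Gaussian norm at most `K`. -/
structure DataAssumption {d : ℕ} (P : Measure (Fin d → ℝ)) (K : ℝ) : Prop where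
  prob : IsProbabilityMeasure P
  norm_eq : ∀ᵐ x ∂P, eNorm x = Real.sqrt d
  subg : vecSubGNorm P ≤ K

/-- Core activation assumption: `φ` is non-linear, Lipschitz, with Lipschitz derivative,
`μ₀ = μ₂ = 0` and `μ₁ ≠ 0`. -/
structure ActivationAssumptionCore (φ : ℝ → ℝ) : Prop where
  nonlinear : ¬ ∃ a b : ℝ, ∀ z, φ z = a * z + b
  lipschitz : ∃ L : NNReal, LipschitzWith L φ
  differentiable : Differentiable ℝ φ
  deriv_lipschitz : ∃ L' : NNReal, LipschitzWith L' (deriv φ)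
  mu0 : hermiteCoeff φ 0 = 0
  mu2 : hermiteCoeff φ 2 = 0
  mu1 : hermiteCoeff φ 1 ≠ 0

/-- Full activation assumption: additionally, there are two non-zero Hermite coefficients
of order ≥ 3 with different parity. -/
structure ActivationAssumption (φ : ℝ → ℝ) extends ActivationAssumptionCore φ : Prop where
  parity : ∃ l l' : ℕ, 3 ≤ l ∧ 3 ≤ l' ∧ l % 2 ≠ l' % 2 ∧
    hermiteCoeff φ l ≠ 0 ∧ hermiteCoeff φ l' ≠ 0

namespace HPCB

abbrev E (m : ℕ) := EuclideanSpace ℝ (Fin m)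

def toE {m : ℕ} (x : Fin m → ℝ) : E m := (WithLp.equiv 2 (Fin m → ℝ)).symm x

@[simp] lemma toE_apply {m : ℕ} (x : Fin m → ℝ) (j : Fin m) : toE x j = x j := rfl

lemma eNorm_eq {m : ℕ} (x : Fin m → ℝ) : eNorm x = ‖toE x‖ := by
  rw [eNorm, EuclideanSpace.norm_eq]
  congr 1
  refine Finset.sum_congr rfl fun j _ => ?_
  rw [toE_apply, Real.norm_eq_abs, sq_abs]

lemma dotp_eq {m : ℕ} (u v : Fin m → ℝ) : dotp u v = inner ℝ (toE u) (toE v) := by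
  rw [dotp, PiLp.inner_apply]
  exact Finset.sum_congr rfl fun j _ => by simp [RCLike.inner_apply]; ring

lemma abs_dotp_le {m : ℕ} (u v : Fin m → ℝ) : |dotp u v| ≤ eNorm u * eNorm v := by
  rw [dotp_eq, eNorm_eq, eNorm_eq]
  exact abs_real_inner_le_norm _ _

lemma eNorm_nonneg {m : ℕ} (x : Fin m → ℝ) : 0 ≤ eNorm x := Real.sqrt_nonneg _

end HPCB

namespace HPCB

lemma schur {d n : ℕ} (x : Fin n → Fin d → ℝ) (T : Finset (Fin n)) (xh : Fin d → ℝ) (R : ℝ)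
    (hR0 : 0 ≤ R)
    (hR : ∀ i ∈ T, ∑ j ∈ T, |dotp (x i) (x j)| ≤ R) :
    ∑ i ∈ T, (dotp (x i) xh) ^ 2 ≤ R * eNorm xh ^ 2 := by
  classical
  set y : Fin n → E d := fun i => toE (x i) with hy
  set Y : E d := toE xh with hY
  have hdx : ∀ i, dotp (x i) xh = inner ℝ (y i) Y := fun i => dotp_eq _ _
  have hdg : ∀ i j, dotp (x i) (x j) = inner ℝ (y i) (y j) := fun i j => dotp_eq _ _
  set c : Fin n → ℝ := fun i => inner ℝ (y i) Y with hc
  set S : ℝ := ∑ i ∈ T, (c i) ^ 2 with hS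
  have hSnn : 0 ≤ S := Finset.sum_nonneg fun i _ => sq_nonneg _
  set v : E d := ∑ i ∈ T, c i • y i with hv
  have h1 : S = inner ℝ v Y := by
    rw [hv, sum_inner]
    refine Finset.sum_congr rfl fun i _ => ?_
    rw [real_inner_smul_left]; ring
  have h2 : S ≤ ‖v‖ * ‖Y‖ := h1 ▸ real_inner_le_norm v Y
  -- bound ‖v‖²
  have h3 : ‖v‖ ^ 2 ≤ R * S := by
    have hvv : ‖v‖ ^ 2 = ∑ i ∈ T, ∑ j ∈ T, c i * c j * inner ℝ (y i) (y j) := by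
      rw [← real_inner_self_eq_norm_sq, hv, sum_inner]
      refine Finset.sum_congr rfl fun i _ => ?_
      rw [real_inner_smul_left, inner_sum]
      rw [Finset.mul_sum]
      refine Finset.sum_congr rfl fun j _ => ?_
      rw [real_inner_smul_right]; ring
    rw [hvv]
    have hstep : ∑ i ∈ T, ∑ j ∈ T, c i * c j * inner ℝ (y i) (y j)
        ≤ ∑ i ∈ T, ∑ j ∈ T, (c i ^ 2 / 2 + c j ^ 2 / 2) * |inner ℝ (y i) (y j)| := by
      refine Finset.sum_le_sum fun i _ => Finset.sum_le_sum fun j _ => ?_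
      have h4 : c i * c j * inner ℝ (y i) (y j) ≤ |c i * c j| * |inner ℝ (y i) (y j)| := by
        calc c i * c j * inner ℝ (y i) (y j) ≤ |c i * c j * inner ℝ (y i) (y j)| := le_abs_self _
        _ = |c i * c j| * |inner ℝ (y i) (y j)| := abs_mul _ _
      refine h4.trans ?_
      have : |c i * c j| ≤ c i ^ 2 / 2 + c j ^ 2 / 2 := by
        rw [abs_mul]
        nlinarith [abs_nonneg (c i), abs_nonneg (c j), sq_abs (c i), sq_abs (c j),
          sq_nonneg (|c i| - |c j|)]
      exact mul_le_mul_of_nonneg_right this (abs_nonneg _)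
    refine hstep.trans ?_
    have hsplit : ∑ i ∈ T, ∑ j ∈ T, (c i ^ 2 / 2 + c j ^ 2 / 2) * |inner ℝ (y i) (y j)|
        = ∑ i ∈ T, c i ^ 2 * ∑ j ∈ T, |inner ℝ (y i) (y j)| := by
      have hsym : ∑ i ∈ T, ∑ j ∈ T, (c j ^ 2 / 2) * |inner ℝ (y i) (y j)|
          = ∑ i ∈ T, ∑ j ∈ T, (c i ^ 2 / 2) * |inner ℝ (y i) (y j)| := by
        rw [Finset.sum_comm]
        refine Finset.sum_congr rfl fun i _ => Finset.sum_congr rfl fun j _ => ?_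
        rw [real_inner_comm]
      calc ∑ i ∈ T, ∑ j ∈ T, (c i ^ 2 / 2 + c j ^ 2 / 2) * |inner ℝ (y i) (y j)|
          = ∑ i ∈ T, ∑ j ∈ T, (c i ^ 2 / 2) * |inner ℝ (y i) (y j)|
            + ∑ i ∈ T, ∑ j ∈ T, (c j ^ 2 / 2) * |inner ℝ (y i) (y j)| := by
            rw [← Finset.sum_add_distrib]
            refine Finset.sum_congr rfl fun i _ => ?_
            rw [← Finset.sum_add_distrib]
            refine Finset.sum_congr rfl fun j _ => ?_
            ring
        _ = ∑ i ∈ T, ∑ j ∈ T, (c i ^ 2) * |inner ℝ (y i) (y j)| := by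
            rw [hsym, ← Finset.sum_add_distrib]
            refine Finset.sum_congr rfl fun i _ => ?_
            rw [← Finset.sum_add_distrib]
            refine Finset.sum_congr rfl fun j _ => ?_
            ring
        _ = ∑ i ∈ T, c i ^ 2 * ∑ j ∈ T, |inner ℝ (y i) (y j)| := by
            refine Finset.sum_congr rfl fun i _ => ?_
            rw [Finset.mul_sum]
    rw [hsplit]
    calc ∑ i ∈ T, c i ^ 2 * ∑ j ∈ T, |inner ℝ (y i) (y j)|
        ≤ ∑ i ∈ T, c i ^ 2 * R := by
          refine Finset.sum_le_sum fun i hi => ?_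
          refine mul_le_mul_of_nonneg_left ?_ (sq_nonneg _)
          have := hR i hi
          calc ∑ j ∈ T, |inner ℝ (y i) (y j)| = ∑ j ∈ T, |dotp (x i) (x j)| := by
                refine Finset.sum_congr rfl fun j _ => by rw [hdg]
            _ ≤ R := this
      _ = R * S := by rw [hS, ← Finset.sum_mul]; ring
  -- conclude
  have hgoal : ∑ i ∈ T, (dotp (x i) xh) ^ 2 = S := by
    refine Finset.sum_congr rfl fun i _ => by rw [hdx]
  rw [hgoal, eNorm_eq]
  rcases eq_or_lt_of_le hSnn with h | h
  · rw [← h]; positivity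
  · -- S > 0 : from S² ≤ S ≤ ‖v‖‖Y‖, ‖v‖² ≤ RS
    have hYnn : (0:ℝ) ≤ ‖Y‖ := norm_nonneg _
    have hvnn : (0:ℝ) ≤ ‖v‖ := norm_nonneg _
    nlinarith [h2, h3, sq_nonneg (‖v‖ - ‖Y‖)]

lemma dotp_self (v : Fin d → ℝ) : dotp v v = eNorm v ^ 2 := by
  rw [eNorm, Real.sq_sqrt (Finset.sum_nonneg fun j _ => sq_nonneg _), dotp]
  exact Finset.sum_congr rfl fun j _ => (sq (v j)).symm ▸ by ring

lemma det_bound {d n : ℕ} (hd : (1:ℝ) ≤ (d:ℕ)) (B2 K₂ : ℝ) (hB2 : 0 ≤ B2) (hK₂ : 1 ≤ K₂)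
    (x : Fin n → Fin d → ℝ)
    (hnorm : ∀ i, eNorm (x i) = Real.sqrt d)
    (hpair : ∀ i j, i ≠ j → |dotp (x i) (x j)| ≤ K₂ * (d:ℝ) ^ ((3:ℝ)/4))
    (hop : ∀ xh : Fin d → ℝ, eNorm xh = Real.sqrt d →
      ∑ i, (dotp (x i) xh)^2 ≤ B2 * (d:ℝ)^2)
    (xh : Fin d → ℝ) (hxh : eNorm xh = Real.sqrt d) (l : ℕ) (hl : 2 ≤ l) :
    eNorm (fun i : Fin n => (dotp (x i) xh) ^ l / (d : ℝ) ^ l) ≤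
      (⨆ i : Fin n, |dotp (x i) xh| / (d : ℝ)) ^ (l - 1) +
        (B2 * (K₂ + 1)) * (d:ℝ) ^ (-(0.1:ℝ)) := by
  classical
  have hd0 : (0:ℝ) < (d:ℝ) := lt_of_lt_of_le one_pos hd
  set a : Fin n → ℝ := fun i => |dotp (x i) xh| / (d:ℝ) with ha_def
  have ha0 : ∀ i, 0 ≤ a i := fun i => div_nonneg (abs_nonneg _) hd0.le
  have ha1 : ∀ i, a i ≤ 1 := by
    intro i
    rw [ha_def, div_le_one hd0]
    calc |dotp (x i) xh| ≤ eNorm (x i) * eNorm xh := abs_dotp_le _ _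
      _ = Real.sqrt d * Real.sqrt d := by rw [hnorm, hxh]
      _ = (d:ℝ) := Real.mul_self_sqrt (Nat.cast_nonneg d)
  -- rewrite the left-hand side
  have hkey : ∀ i, ((dotp (x i) xh) ^ l / (d:ℝ) ^ l) ^ 2 = a i ^ (2 * l) := by
    intro i
    rw [ha_def]
    have h1 : (|dotp (x i) xh| / (d:ℝ)) ^ (2*l) = (dotp (x i) xh)^(2*l) / (d:ℝ)^(2*l) := by
      rw [div_pow, ← abs_pow, abs_of_nonneg]
      rw [mul_comm 2 l, pow_mul]
      positivity
    rw [h1, div_pow, ← pow_mul, ← pow_mul, mul_comm l 2]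
  have hLHS : eNorm (fun i : Fin n => (dotp (x i) xh) ^ l / (d : ℝ) ^ l)
      = Real.sqrt (∑ i, a i ^ (2*l)) := by
    rw [eNorm]
    congr 1
    exact Finset.sum_congr rfl fun i _ => hkey i
  rw [hLHS]
  have hsum2 : ∑ i, a i ^ 2 ≤ B2 := by
    have h1 : ∑ i, a i ^ 2 = (∑ i, (dotp (x i) xh)^2) / (d:ℝ)^2 := by
      rw [Finset.sum_div]
      refine Finset.sum_congr rfl fun i _ => ?_
      rw [ha_def, div_pow, sq_abs]
    rw [h1, div_le_iff₀ (by positivity)]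
    have := hop xh hxh
    linarith
  have hrpow_nonneg : (0:ℝ) ≤ (d:ℝ) ^ (-(0.1:ℝ)) := Real.rpow_nonneg hd0.le _
  rcases Nat.eq_zero_or_pos n with hn | hn
  · subst hn
    rw [Finset.univ_eq_empty, Finset.sum_empty, Real.sqrt_zero]
    have : (⨆ i : Fin 0, |dotp (x i) xh| / (d : ℝ)) = 0 := by
      rw [iSup, Set.range_eq_empty, Real.sSup_empty]
    rw [this]
    have : (0:ℝ)^(l-1) = 0 := zero_pow (by omega)
    rw [this]
    positivity
  haveI : Nonempty (Fin n) := Fin.pos_iff_nonempty.mp hn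
  set C₁ : ℝ := ⨆ i : Fin n, |dotp (x i) xh| / (d:ℝ) with hC₁def
  have hbdd : BddAbove (Set.range fun i : Fin n => |dotp (x i) xh| / (d:ℝ)) :=
    Set.Finite.bddAbove (Set.finite_range _)
  have hC₁le : ∀ i, a i ≤ C₁ := fun i => le_ciSup hbdd i
  have hC₁1 : C₁ ≤ 1 := ciSup_le ha1
  have hC₁0 : 0 ≤ C₁ := le_trans (ha0 (Classical.arbitrary _)) (hC₁le _)
  rcases eq_or_lt_of_le hC₁0 with hC₁z | hC₁pos
  · -- C₁ = 0 : all a i = 0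
    have hz : ∀ i, a i = 0 := fun i => le_antisymm (hC₁z ▸ hC₁le i) (ha0 i)
    have : ∑ i, a i ^ (2*l) = 0 := Finset.sum_eq_zero fun i _ => by
      rw [hz i]; exact zero_pow (by omega)
    rw [this, Real.sqrt_zero]
    have h1 : (0:ℝ) ≤ C₁ ^ (l-1) := le_of_eq (by rw [← hC₁z]; exact (zero_pow (by omega)).symm)
    positivity
  -- main case
  set δ2 : ℝ := C₁ * (d:ℝ) ^ (-(1:ℝ)/8) with hδ2def
  have hd18 : (0:ℝ) < (d:ℝ) ^ (-(1:ℝ)/8) := Real.rpow_pos_of_pos hd0 _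
  have hδ2pos : 0 < δ2 := mul_pos hC₁pos hd18
  set T : Finset (Fin n) := Finset.univ.filter (fun i => δ2 < (a i)^2) with hT_def
  set m : ℕ := T.card with hm_def
  have hcount : (m:ℝ) * δ2 ≤ B2 := by
    have h1 : (m:ℝ) * δ2 = ∑ _i ∈ T, δ2 := by
      rw [Finset.sum_const, nsmul_eq_mul]
    rw [h1]
    calc ∑ _i ∈ T, δ2 ≤ ∑ i ∈ T, a i ^ 2 := by
          refine Finset.sum_le_sum fun i hi => ?_
          have := (Finset.mem_filter.mp hi).2
          exact this.le
      _ ≤ ∑ i, a i ^ 2 := Finset.sum_le_sum_of_subset_of_nonneg (Finset.subset_univ _)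
          (fun i _ _ => sq_nonneg _)
      _ ≤ B2 := hsum2
  -- Gram bound on T
  have hd34 : (0:ℝ) ≤ K₂ * (d:ℝ) ^ ((3:ℝ)/4) := by positivity
  have hST : ∑ i ∈ T, a i ^ 2 ≤ 1 + (m:ℝ) * K₂ * (d:ℝ) ^ (-(1:ℝ)/4) := by
    have hR : ∀ i ∈ T, ∑ j ∈ T, |dotp (x i) (x j)| ≤ (d:ℝ) + m * (K₂ * (d:ℝ)^((3:ℝ)/4)) := by
      intro i hi
      rw [← Finset.add_sum_erase _ _ hi]
      have h1 : |dotp (x i) (x i)| = (d:ℝ) := by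
        rw [dotp_self, hnorm, Real.sq_sqrt (Nat.cast_nonneg d), abs_of_nonneg (Nat.cast_nonneg d)]
      rw [h1]
      gcongr
      calc ∑ j ∈ T.erase i, |dotp (x i) (x j)|
          ≤ ∑ _j ∈ T.erase i, K₂ * (d:ℝ)^((3:ℝ)/4) := by
            refine Finset.sum_le_sum fun j hj => ?_
            exact hpair i j (fun h => (Finset.ne_of_mem_erase hj) h.symm)
        _ = (T.erase i).card * (K₂ * (d:ℝ)^((3:ℝ)/4)) := by
            rw [Finset.sum_const, nsmul_eq_mul]
        _ ≤ (m:ℝ) * (K₂ * (d:ℝ)^((3:ℝ)/4)) := by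
            refine mul_le_mul_of_nonneg_right ?_ hd34
            have hce : (T.erase i).card ≤ m := Finset.card_erase_le
            exact_mod_cast hce
    have hschur := schur x T xh ((d:ℝ) + m * (K₂ * (d:ℝ)^((3:ℝ)/4))) (by positivity) hR
    have hxh2 : eNorm xh ^ 2 = (d:ℝ) := by rw [hxh, Real.sq_sqrt (Nat.cast_nonneg d)]
    rw [hxh2] at hschur
    have h2 : ∑ i ∈ T, a i ^ 2 = (∑ i ∈ T, (dotp (x i) xh)^2) / (d:ℝ)^2 := by
      rw [Finset.sum_div]
      refine Finset.sum_congr rfl fun i _ => by rw [ha_def, div_pow, sq_abs]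
    rw [h2, div_le_iff₀ (by positivity)]
    calc ∑ i ∈ T, (dotp (x i) xh)^2 ≤ ((d:ℝ) + m * (K₂ * (d:ℝ)^((3:ℝ)/4))) * (d:ℝ) := hschur
      _ = (1 + (m:ℝ) * K₂ * (d:ℝ) ^ (-(1:ℝ)/4)) * (d:ℝ)^2 := by
          have h3 : (d:ℝ) ^ (-(1:ℝ)/4) * (d:ℝ) = (d:ℝ) ^ ((3:ℝ)/4) := by
            rw [← Real.rpow_add_one hd0.ne']
            norm_num
          rw [← h3]; ring

  -- top part
  have htop : ∑ i ∈ T, a i ^ (2*l) ≤ C₁^(2*l-2) * ∑ i ∈ T, a i ^ 2 := by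
    rw [Finset.mul_sum]
    refine Finset.sum_le_sum fun i _ => ?_
    have h1 : a i ^ (2*l) = a i ^ (2*l-2) * a i ^ 2 := by
      rw [← pow_add]; congr 1; omega
    rw [h1]
    exact mul_le_mul_of_nonneg_right (pow_le_pow_left₀ (ha0 i) (hC₁le i) _) (sq_nonneg _)
  -- rest part
  have hrest : ∑ i ∈ Finset.univ.filter (fun i => ¬ (δ2 < (a i)^2)), a i ^ (2*l)
      ≤ δ2 ^ (l-1) * B2 := by
    have h0 : (0:ℝ) ≤ δ2 ^ (l-1) := by positivity
    calc ∑ i ∈ Finset.univ.filter (fun i => ¬ (δ2 < (a i)^2)), a i ^ (2*l)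
        ≤ ∑ i ∈ Finset.univ.filter (fun i => ¬ (δ2 < (a i)^2)), δ2 ^ (l-1) * a i ^ 2 := by
          refine Finset.sum_le_sum fun i hi => ?_
          have hle : a i ^ 2 ≤ δ2 := not_lt.mp (Finset.mem_filter.mp hi).2
          have h1 : a i ^ (2*l) = (a i ^ 2) ^ (l-1) * a i ^ 2 := by
            rw [← pow_mul, ← pow_add]; congr 1; omega
          rw [h1]
          exact mul_le_mul_of_nonneg_right (pow_le_pow_left₀ (sq_nonneg _) hle _) (sq_nonneg _)
      _ = δ2 ^ (l-1) * ∑ i ∈ Finset.univ.filter (fun i => ¬ (δ2 < (a i)^2)), a i ^ 2 := by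
          rw [Finset.mul_sum]
      _ ≤ δ2 ^ (l-1) * B2 := by
          refine mul_le_mul_of_nonneg_left ?_ h0
          refine le_trans ?_ hsum2
          exact Finset.sum_le_sum_of_subset_of_nonneg (Finset.subset_univ _)
            (fun i _ _ => sq_nonneg _)
  -- combine
  have hsplit : ∑ i, a i ^ (2*l)
      = ∑ i ∈ T, a i ^ (2*l) + ∑ i ∈ Finset.univ.filter (fun i => ¬ (δ2 < (a i)^2)), a i ^ (2*l) := by
    rw [hT_def]
    exact (Finset.sum_filter_add_sum_filter_not _ _ _).symm
  -- numeric bounds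
  have hmid : C₁^(2*l-2) * ((m:ℝ) * K₂ * (d:ℝ) ^ (-(1:ℝ)/4))
      ≤ B2 * K₂ * (C₁^(l-1) * (d:ℝ) ^ (-(1:ℝ)/8)) := by
    have hC₁m : C₁ * (m:ℝ) ≤ B2 * (d:ℝ) ^ ((1:ℝ)/8) := by
      have h1 : (m:ℝ) * δ2 = C₁ * (m:ℝ) * (d:ℝ) ^ (-(1:ℝ)/8) := by rw [hδ2def]; ring
      have h2 := hcount
      rw [h1] at h2
      have h3 : (0:ℝ) < (d:ℝ) ^ ((1:ℝ)/8) := Real.rpow_pos_of_pos hd0 _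
      have h4 : (d:ℝ) ^ (-(1:ℝ)/8) * (d:ℝ) ^ ((1:ℝ)/8) = 1 := by
        rw [← Real.rpow_add hd0]; norm_num
      calc C₁ * (m:ℝ) = C₁ * (m:ℝ) * (d:ℝ) ^ (-(1:ℝ)/8) * (d:ℝ) ^ ((1:ℝ)/8) := by
            rw [mul_assoc (C₁ * (m:ℝ)), h4, mul_one]
        _ ≤ B2 * (d:ℝ) ^ ((1:ℝ)/8) := mul_le_mul_of_nonneg_right h2 h3.le
    have hsplitpow : C₁^(2*l-2) = C₁^(2*l-3) * C₁ := by
      rw [← pow_succ]; congr 1; omega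
    have hC₁pow : C₁^(2*l-3) ≤ C₁^(l-1) := pow_le_pow_of_le_one hC₁0 hC₁1 (by omega)
    have hd4 : (0:ℝ) ≤ (d:ℝ) ^ (-(1:ℝ)/4) := (Real.rpow_pos_of_pos hd0 _).le
    have hdd : (d:ℝ) ^ ((1:ℝ)/8) * (d:ℝ) ^ (-(1:ℝ)/4) = (d:ℝ) ^ (-(1:ℝ)/8) := by
      rw [← Real.rpow_add hd0]; norm_num
    calc C₁^(2*l-2) * ((m:ℝ) * K₂ * (d:ℝ) ^ (-(1:ℝ)/4))
        = C₁^(2*l-3) * (C₁ * (m:ℝ)) * K₂ * (d:ℝ) ^ (-(1:ℝ)/4) := by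
          rw [hsplitpow]; ring
      _ ≤ C₁^(2*l-3) * (B2 * (d:ℝ) ^ ((1:ℝ)/8)) * K₂ * (d:ℝ) ^ (-(1:ℝ)/4) := by
          have hK₂0 : (0:ℝ) ≤ K₂ := le_trans zero_le_one hK₂
          have h5 : (0:ℝ) ≤ C₁^(2*l-3) := pow_nonneg hC₁0 _
          gcongr
      _ = C₁^(2*l-3) * B2 * K₂ * ((d:ℝ) ^ ((1:ℝ)/8) * (d:ℝ) ^ (-(1:ℝ)/4)) := by ring
      _ = C₁^(2*l-3) * B2 * K₂ * (d:ℝ) ^ (-(1:ℝ)/8) := by rw [hdd]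
      _ ≤ C₁^(l-1) * B2 * K₂ * (d:ℝ) ^ (-(1:ℝ)/8) := by
          have hK₂0 : (0:ℝ) ≤ K₂ := le_trans zero_le_one hK₂
          have hd8 : (0:ℝ) ≤ (d:ℝ) ^ (-(1:ℝ)/8) := hd18.le
          gcongr
      _ = B2 * K₂ * (C₁^(l-1) * (d:ℝ) ^ (-(1:ℝ)/8)) := by ring
  have hrest2 : δ2 ^ (l-1) * B2 ≤ B2 * (C₁^(l-1) * (d:ℝ) ^ (-(1:ℝ)/8)) := by
    have h1 : δ2 ^ (l-1) = C₁^(l-1) * ((d:ℝ) ^ (-(1:ℝ)/8))^(l-1) := by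
      rw [hδ2def, mul_pow]
    have h2 : ((d:ℝ) ^ (-(1:ℝ)/8))^(l-1) ≤ (d:ℝ) ^ (-(1:ℝ)/8) := by
      have hle1 : (d:ℝ) ^ (-(1:ℝ)/8) ≤ 1 := by
        apply Real.rpow_le_one_of_one_le_of_nonpos hd
        norm_num
      calc ((d:ℝ) ^ (-(1:ℝ)/8))^(l-1) ≤ ((d:ℝ) ^ (-(1:ℝ)/8))^1 :=
            pow_le_pow_of_le_one hd18.le hle1 (by omega)
        _ = (d:ℝ) ^ (-(1:ℝ)/8) := pow_one _
    rw [h1]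
    have h3 : (0:ℝ) ≤ C₁^(l-1) := pow_nonneg hC₁0 _
    calc C₁^(l-1) * ((d:ℝ) ^ (-(1:ℝ)/8))^(l-1) * B2 ≤ C₁^(l-1) * (d:ℝ) ^ (-(1:ℝ)/8) * B2 := by
          gcongr
      _ = B2 * (C₁^(l-1) * (d:ℝ) ^ (-(1:ℝ)/8)) := by ring
  -- total bound
  set A : ℝ := C₁ ^ (l-1) with hA_def
  set h : ℝ := B2 * (K₂+1) * (d:ℝ) ^ (-(1:ℝ)/8) with hh_def
  have hA0 : 0 ≤ A := pow_nonneg hC₁0 _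
  have hh0 : 0 ≤ h := by positivity
  have htotal : ∑ i, a i ^ (2*l) ≤ A^2 + A * h := by
    rw [hsplit]
    have hAsq : C₁^(2*l-2) = A^2 := by
      rw [hA_def, ← pow_mul]; congr 1; omega
    calc ∑ i ∈ T, a i ^ (2*l) + ∑ i ∈ Finset.univ.filter (fun i => ¬ (δ2 < (a i)^2)), a i ^ (2*l)
        ≤ C₁^(2*l-2) * (1 + (m:ℝ) * K₂ * (d:ℝ) ^ (-(1:ℝ)/4)) + δ2 ^ (l-1) * B2 := by
          refine add_le_add ?_ hrest
          refine le_trans htop ?_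
          refine mul_le_mul_of_nonneg_left hST (pow_nonneg hC₁0 _)
      _ = C₁^(2*l-2) + C₁^(2*l-2) * ((m:ℝ) * K₂ * (d:ℝ) ^ (-(1:ℝ)/4)) + δ2 ^ (l-1) * B2 := by
          ring
      _ ≤ A^2 + B2 * K₂ * (A * (d:ℝ) ^ (-(1:ℝ)/8)) + B2 * (A * (d:ℝ) ^ (-(1:ℝ)/8)) := by
          rw [hAsq]
          exact add_le_add (add_le_add le_rfl (hAsq ▸ hmid)) hrest2
      _ = A^2 + A * h := by rw [hh_def]; ring
  have hsq : ∑ i, a i ^ (2*l) ≤ (A + h)^2 := by nlinarith [sq_nonneg h]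
  have hsqrt : Real.sqrt (∑ i, a i ^ (2*l)) ≤ A + h := by
    calc Real.sqrt (∑ i, a i ^ (2*l)) ≤ Real.sqrt ((A+h)^2) := Real.sqrt_le_sqrt hsq
      _ = A + h := Real.sqrt_sq (by linarith)
  refine hsqrt.trans ?_
  have hfin : h ≤ B2 * (K₂ + 1) * (d:ℝ) ^ (-(0.1:ℝ)) := by
    rw [hh_def]
    have : (d:ℝ) ^ (-(1:ℝ)/8) ≤ (d:ℝ) ^ (-(0.1:ℝ)) :=
      Real.rpow_le_rpow_of_exponent_le hd (by norm_num)
    have hB2K : (0:ℝ) ≤ B2 * (K₂+1) := by positivity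
    exact mul_le_mul_of_nonneg_left this hB2K
  have : A = C₁ ^ (l-1) := hA_def
  linarith

lemma nontrivial_E {d : ℕ} (hd : 1 ≤ d) : Nontrivial (E d) := by
  refine ⟨EuclideanSpace.single (⟨0, hd⟩ : Fin d) (1:ℝ), 0, fun h => ?_⟩
  have h1 : ‖EuclideanSpace.single (⟨0, hd⟩ : Fin d) (1:ℝ)‖ = 1 := by
    rw [EuclideanSpace.norm_single]; norm_num
  rw [h, norm_zero] at h1
  norm_num at h1

lemma sep_card {d : ℕ} (hd : 1 ≤ d) (S : Finset (E d)) (hS : ∀ v ∈ S, ‖v‖ ≤ 1)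
    (hsep : ∀ u ∈ S, ∀ v ∈ S, u ≠ v → 1/2 < dist u v) : S.card ≤ 5 ^ d := by
  haveI := nontrivial_E hd
  have hdisj : (↑S : Set (E d)).PairwiseDisjoint (fun v => Metric.ball v (4⁻¹ : ℝ)) := by
    intro u hu v hv huv
    apply Metric.ball_disjoint_ball
    have := hsep u (by exact_mod_cast hu) v (by exact_mod_cast hv) huv
    linarith
  have hmeas := measure_biUnion_finset (μ := (volume : Measure (E d))) hdisj (fun b _ => (measurableSet_ball :
    MeasurableSet (Metric.ball b (4⁻¹:ℝ))))
  have hsub : (⋃ v ∈ S, Metric.ball v (4⁻¹:ℝ)) ⊆ Metric.ball (0 : E d) (5/4 : ℝ) := by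
    intro y hy
    simp only [Set.mem_iUnion] at hy
    obtain ⟨v, hv, hyv⟩ := hy
    rw [Metric.mem_ball] at hyv ⊢
    have h1 : dist y (0 : E d) ≤ dist y v + dist v 0 := dist_triangle _ _ _
    have h2 : dist v (0 : E d) ≤ 1 := by rw [dist_zero_right]; exact hS v (by exact_mod_cast hv)
    linarith
  have hball : ∀ (z : E d) (r : ℝ), 0 ≤ r → (volume : Measure (E d)) (Metric.ball z r)
      = ENNReal.ofReal (r ^ d) * volume (Metric.ball (0 : E d) 1) := by
    intro z r hr
    rw [Measure.addHaar_ball _ _ hr, finrank_euclideanSpace_fin]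
  set V := (volume : Measure (E d)) (Metric.ball (0 : E d) 1) with hV
  have hVpos : V ≠ 0 := (Metric.measure_ball_pos volume (0 : E d) (by norm_num : (0:ℝ) < 1)).ne'
  have hVtop : V ≠ ⊤ := (measure_ball_lt_top).ne
  set sc : ℝ≥0∞ := (S.card : ℝ≥0∞) with hsc
  have hchain : sc * (ENNReal.ofReal ((4⁻¹:ℝ) ^ d) * V)
      ≤ ENNReal.ofReal ((5/4:ℝ) ^ d) * V := by
    calc sc * (ENNReal.ofReal ((4⁻¹:ℝ) ^ d) * V)
        = ∑ v ∈ S, (ENNReal.ofReal ((4⁻¹:ℝ) ^ d) * V) := by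
          rw [Finset.sum_const, nsmul_eq_mul]
      _ = ∑ v ∈ S, (volume : Measure (E d)) (Metric.ball v (4⁻¹:ℝ)) := by
          refine Finset.sum_congr rfl fun v _ => ?_
          rw [hball v _ (by norm_num)]
      _ = (volume : Measure (E d)) (⋃ v ∈ S, Metric.ball v (4⁻¹:ℝ)) := hmeas.symm
      _ ≤ (volume : Measure (E d)) (Metric.ball (0 : E d) (5/4 : ℝ)) := measure_mono hsub
      _ = ENNReal.ofReal ((5/4:ℝ) ^ d) * V := hball 0 _ (by norm_num)
  have hchain2 : sc * ENNReal.ofReal ((4⁻¹:ℝ) ^ d)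
      ≤ ENNReal.ofReal ((5/4:ℝ) ^ d) := by
    have h := hchain
    rw [show sc * (ENNReal.ofReal ((4⁻¹:ℝ) ^ d) * V)
          = V * (sc * ENNReal.ofReal ((4⁻¹:ℝ) ^ d)) by ring,
        show ENNReal.ofReal ((5/4:ℝ) ^ d) * V
          = V * ENNReal.ofReal ((5/4:ℝ) ^ d) by ring] at h
    exact (ENNReal.mul_le_mul_iff_right hVpos hVtop).mp h
  have hfinal : sc ≤ ENNReal.ofReal ((5:ℝ) ^ d) := by
    have h1 : ENNReal.ofReal ((4⁻¹:ℝ) ^ d) * ENNReal.ofReal ((4:ℝ) ^ d) = 1 := by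
      rw [← ENNReal.ofReal_mul (by positivity)]
      have : (4⁻¹:ℝ) ^ d * (4:ℝ) ^ d = 1 := by
        rw [← mul_pow]; norm_num
      rw [this, ENNReal.ofReal_one]
    calc sc = sc * (ENNReal.ofReal ((4⁻¹:ℝ) ^ d)
          * ENNReal.ofReal ((4:ℝ) ^ d)) := by rw [h1, mul_one]
      _ = sc * ENNReal.ofReal ((4⁻¹:ℝ) ^ d) * ENNReal.ofReal ((4:ℝ) ^ d) := by
          rw [mul_assoc]
      _ ≤ ENNReal.ofReal ((5/4:ℝ) ^ d) * ENNReal.ofReal ((4:ℝ) ^ d) := by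
          exact mul_le_mul_left hchain2 _
      _ = ENNReal.ofReal ((5:ℝ) ^ d) := by
          rw [← ENNReal.ofReal_mul (by positivity), ← mul_pow]
          norm_num
  have h5 : ((5:ℝ) ^ d) = ((5 ^ d : ℕ) : ℝ) := by push_cast; ring
  rw [h5, ENNReal.ofReal_natCast] at hfinal
  rw [hsc] at hfinal
  exact_mod_cast hfinal

lemma exists_net (d : ℕ) (hd : 1 ≤ d) :
    ∃ N : Finset (E d), N.card ≤ 5 ^ d ∧ (∀ v ∈ N, ‖v‖ = 1) ∧
      ∀ u : E d, ‖u‖ = 1 → ∃ v ∈ N, dist u v ≤ 1/2 := by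
  classical
  set 𝒜 : Set ℕ := {k | ∃ S : Finset (E d), (∀ v ∈ S, ‖v‖ = 1) ∧
      (∀ u ∈ S, ∀ v ∈ S, u ≠ v → 1/2 < dist u v) ∧ S.card = k} with h𝒜
  have h0 : 0 ∈ 𝒜 := ⟨∅, by simp⟩
  have hbdd : ∀ k ∈ 𝒜, k ≤ 5 ^ d := by
    rintro k ⟨S, h1, h2, h3⟩
    exact h3 ▸ sep_card hd S (fun v hv => (h1 v hv).le) h2
  have hbdd' : BddAbove 𝒜 := ⟨5 ^ d, fun k hk => hbdd k hk⟩
  have hmem := Nat.sSup_mem ⟨0, h0⟩ hbdd'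
  obtain ⟨S, hS1, hS2, hS3⟩ := hmem
  refine ⟨S, ?_, hS1, ?_⟩
  · rw [hS3]; exact csSup_le ⟨0, h0⟩ hbdd
  · intro u hu
    by_contra hcon
    push_neg at hcon
    have hunotin : u ∉ S := by
      intro h
      have := hcon u h
      rw [dist_self] at this
      linarith
    have hnew : S.card + 1 ∈ 𝒜 := by
      refine ⟨insert u S, ?_, ?_, ?_⟩
      · intro v hv
        rcases Finset.mem_insert.mp hv with rfl | hv
        · exact hu
        · exact hS1 v hv
      · intro p hp q hq hpq
        rcases Finset.mem_insert.mp hp with hp' | hp' <;>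
          rcases Finset.mem_insert.mp hq with hq' | hq'
        · exact absurd (hp'.trans hq'.symm) hpq
        · subst hp'; exact hcon q hq'
        · subst hq'; rw [dist_comm]; exact hcon p hp'
        · exact hS2 p hp' q hq' hpq
      · rw [Finset.card_insert_of_notMem hunotin]
    have hle : S.card + 1 ≤ sSup 𝒜 := le_csSup hbdd' hnew
    rw [hS3] at hle
    omega

lemma opnorm_of_net {X Y : Type*} [NormedAddCommGroup X] [NormedSpace ℝ X]
    [NormedAddCommGroup Y] [NormedSpace ℝ Y]
    (L : X →L[ℝ] Y) (N : Finset X) (b : ℝ) (hb : 0 ≤ b)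
    (hcov : ∀ u : X, ‖u‖ = 1 → ∃ v ∈ N, dist u v ≤ 1/2)
    (hN : ∀ v ∈ N, ‖L v‖ ≤ b) : ‖L‖ ≤ 2 * b := by
  have hL0 := ContinuousLinearMap.opNorm_nonneg L
  have h1 : ‖L‖ ≤ ‖L‖/2 + b := by
    refine ContinuousLinearMap.opNorm_le_bound _ (by linarith) fun u => ?_
    rcases eq_or_ne u 0 with rfl | hu
    · simp
    · have hu0 : (0:ℝ) < ‖u‖ := norm_pos_iff.mpr hu
      set w : X := ‖u‖⁻¹ • u with hw_def
      have hw : ‖w‖ = 1 := norm_smul_inv_norm hu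
      obtain ⟨v, hvN, hdist⟩ := hcov w hw
      have h2 : ‖L w‖ ≤ ‖L‖/2 + b := by
        calc ‖L w‖ = ‖L (w - v) + L v‖ := by rw [map_sub, sub_add_cancel]
          _ ≤ ‖L (w - v)‖ + ‖L v‖ := norm_add_le _ _
          _ ≤ ‖L‖ * ‖w - v‖ + b := add_le_add (L.le_opNorm _) (hN v hvN)
          _ ≤ ‖L‖ * (1/2) + b := by
              have : ‖w - v‖ ≤ 1/2 := by rw [← dist_eq_norm]; exact hdist
              exact add_le_add (mul_le_mul_of_nonneg_left this hL0) le_rfl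
          _ = ‖L‖/2 + b := by ring
      have h3 : ‖L u‖ = ‖u‖ * ‖L w‖ := by
        have h4 : L w = ‖u‖⁻¹ • L u := by rw [hw_def]; exact L.map_smul _ _
        rw [h4, norm_smul, norm_inv, norm_norm, ← mul_assoc,
          mul_inv_cancel₀ hu0.ne', one_mul]
      rw [h3, mul_comm]
      exact mul_le_mul_of_nonneg_right h2 hu0.le
  linarith

lemma measurable_dotp {d : ℕ} (u : Fin d → ℝ) :
    Measurable (fun y : Fin d → ℝ => dotp u y) := by
  have : (fun y : Fin d → ℝ => dotp u y) = fun y => ∑ j, u j * y j := by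
    funext y; rfl
  rw [this]
  fun_prop

lemma measurable_eNorm {d : ℕ} : Measurable (fun y : Fin d → ℝ => eNorm y) := by
  have : (fun y : Fin d → ℝ => eNorm y) = fun y => Real.sqrt (∑ j, (y j)^2) := rfl
  rw [this]
  exact (Finset.measurable_sum _ fun j _ => (measurable_pi_apply j).pow_const 2).sqrt

lemma integrable_of_bounded {α : Type*} [MeasurableSpace α] (P : Measure α)
    [IsProbabilityMeasure P] (f : α → ℝ) (hf : Measurable f) (Cb : ℝ)
    (hb : ∀ᵐ y ∂P, |f y| ≤ Cb) : Integrable f P := by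
  refine Integrable.mono' (integrable_const Cb) hf.aestronglyMeasurable ?_
  filter_upwards [hb] with y hy
  rwa [Real.norm_eq_abs]

lemma cs_sq_ae {d : ℕ} {P : Measure (Fin d → ℝ)} {K : ℝ} (hDA : DataAssumption P K)
    (u : Fin d → ℝ) (hu : eNorm u = 1) : ∀ᵐ y ∂P, (dotp u y)^2 ≤ (d:ℝ) := by
  filter_upwards [hDA.norm_eq] with y hy
  have h1 : |dotp u y| ≤ Real.sqrt d := by
    calc |dotp u y| ≤ eNorm u * eNorm y := abs_dotp_le _ _
      _ = Real.sqrt d := by rw [hu, hy, one_mul]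
  calc (dotp u y)^2 = |dotp u y|^2 := (sq_abs _).symm
    _ ≤ (Real.sqrt d)^2 := pow_le_pow_left₀ (abs_nonneg _) h1 2
    _ = (d:ℝ) := Real.sq_sqrt (Nat.cast_nonneg d)

lemma integrable_expsq {d : ℕ} {P : Measure (Fin d → ℝ)} {K : ℝ} (hDA : DataAssumption P K)
    (u : Fin d → ℝ) (hu : eNorm u = 1) (s : ℝ) (hs : s ≠ 0) :
    Integrable (fun y => Real.exp ((dotp u y)^2 / s^2)) P := by
  haveI := hDA.prob
  refine integrable_of_bounded P _ ?_ (Real.exp ((d:ℝ)/s^2)) ?_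
  · exact (((measurable_dotp u).pow_const 2).div_const (s^2)).exp
  · filter_upwards [cs_sq_ae hDA u hu] with y hy
    rw [abs_of_nonneg (Real.exp_nonneg _)]
    apply Real.exp_le_exp.mpr
    apply div_le_div_of_nonneg_right hy
    positivity

lemma mem_S_sqrt2d {d : ℕ} (hd : 1 ≤ d) {P : Measure (Fin d → ℝ)} {K : ℝ}
    (hDA : DataAssumption P K) (u : Fin d → ℝ) (hu : eNorm u = 1) :
    Real.sqrt (2*(d:ℝ)) ∈ {s : ℝ | 0 < s ∧ ∫ y, Real.exp ((dotp u y)^2 / s^2) ∂P ≤ 2} := by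
  haveI := hDA.prob
  have hd0 : (0:ℝ) < (d:ℝ) := by exact_mod_cast hd
  have hpos : (0:ℝ) < Real.sqrt (2*(d:ℝ)) := Real.sqrt_pos.mpr (by linarith)
  refine ⟨hpos, ?_⟩
  have hsq : (Real.sqrt (2*(d:ℝ)))^2 = 2*(d:ℝ) := Real.sq_sqrt (by linarith)
  have hexphalf : Real.exp ((1:ℝ)/2) ≤ 2 := by
    have h1 : Real.exp 1 < 2.7182818286 := Real.exp_one_lt_d9
    nlinarith [Real.exp_pos ((1:ℝ)/2), Real.exp_add ((1:ℝ)/2) ((1:ℝ)/2),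
      Real.exp_nonneg ((1:ℝ)/2)]
  have hptw : ∀ᵐ y ∂P, Real.exp ((dotp u y)^2 / (Real.sqrt (2*(d:ℝ)))^2) ≤ 2 := by
    filter_upwards [cs_sq_ae hDA u hu] with y hy
    refine le_trans ?_ hexphalf
    apply Real.exp_le_exp.mpr
    rw [hsq, div_le_div_iff₀ (by linarith) (by norm_num)]
    linarith
  calc ∫ y, Real.exp ((dotp u y)^2 / (Real.sqrt (2*(d:ℝ)))^2) ∂P
      ≤ ∫ _y, (2:ℝ) ∂P := by
        refine integral_mono_ae (integrable_expsq hDA u hu _ hpos.ne') (integrable_const 2) hptw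
    _ = 2 := by rw [integral_const]; simp

lemma mgf_bound {d : ℕ} (hd : 1 ≤ d) {P : Measure (Fin d → ℝ)} {K : ℝ}
    (hDA : DataAssumption P K) (u : Fin d → ℝ) (hu : eNorm u = 1) {t : ℝ}
    (ht : K < t) (ht0 : 0 < t) :
    ∫ y, Real.exp ((dotp u y)^2 / t^2) ∂P ≤ 2 := by
  haveI := hDA.prob
  set S : Set ℝ := {s : ℝ | 0 < s ∧ ∫ y, Real.exp ((dotp u y)^2 / s^2) ∂P ≤ 2} with hS_def
  have hSne : S.Nonempty := ⟨_, mem_S_sqrt2d hd hDA u hu⟩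
  have hbddS : BddBelow S := ⟨0, fun s hs => hs.1.le⟩
  have hbddrange : BddAbove (Set.range fun v : {w : Fin d → ℝ // eNorm w = 1} =>
      sInf {s : ℝ | 0 < s ∧ ∫ y, Real.exp ((dotp v.1 y)^2 / s^2) ∂P ≤ 2}) := by
    refine ⟨Real.sqrt (2*(d:ℝ)), ?_⟩
    rintro _ ⟨v, rfl⟩
    exact csInf_le ⟨0, fun s hs => hs.1.le⟩ (mem_S_sqrt2d hd hDA v.1 v.2)
  have hle : sInf S ≤ K := by
    have h2 := hDA.subg
    rw [vecSubGNorm] at h2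
    exact le_trans (le_ciSup hbddrange ⟨u, hu⟩) h2
  obtain ⟨s, hsS, hst⟩ := exists_lt_of_csInf_lt hSne (lt_of_le_of_lt hle ht)
  have hs0 : 0 < s := hsS.1
  refine le_trans ?_ hsS.2
  refine integral_mono_ae (integrable_expsq hDA u hu t ht0.ne')
    (integrable_expsq hDA u hu s hs0.ne') ?_
  filter_upwards with y
  apply Real.exp_le_exp.mpr
  apply div_le_div_of_nonneg_left (sq_nonneg _) (by positivity)
  nlinarith

lemma tail_bound {d : ℕ} {P : Measure (Fin d → ℝ)} [IsProbabilityMeasure P]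
    (u : Fin d → ℝ) (t r : ℝ) (ht0 : 0 < t) (hr : 0 ≤ r)
    (hint : Integrable (fun y => Real.exp ((dotp u y)^2 / t^2)) P)
    (hmgf : ∫ y, Real.exp ((dotp u y)^2 / t^2) ∂P ≤ 2) :
    P {y | r ≤ |dotp u y|} ≤ ENNReal.ofReal (2 * Real.exp (-(r^2 / t^2))) := by
  set ε := Real.exp (r^2/t^2) with hε_def
  have hε0 : 0 < ε := Real.exp_pos _
  have hmarkov := mul_meas_ge_le_integral_of_nonneg
    (Filter.Eventually.of_forall fun y => Real.exp_nonneg _) hint ε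
  have hsub : {y : Fin d → ℝ | r ≤ |dotp u y|}
      ⊆ {y : Fin d → ℝ | ε ≤ Real.exp ((dotp u y)^2/t^2)} := by
    intro y hy
    simp only [Set.mem_setOf_eq] at hy ⊢
    apply Real.exp_le_exp.mpr
    apply div_le_div_of_nonneg_right ?_ (by positivity)
    calc r^2 ≤ |dotp u y|^2 := pow_le_pow_left₀ hr hy 2
      _ = (dotp u y)^2 := sq_abs _
  have hfin : P {y | r ≤ |dotp u y|} ≠ ⊤ := measure_ne_top _ _
  rw [ENNReal.le_ofReal_iff_toReal_le hfin (by positivity)]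
  have h1 : (P {y | r ≤ |dotp u y|}).toReal
      ≤ (P {y : Fin d → ℝ | ε ≤ Real.exp ((dotp u y)^2/t^2)}).toReal := by
    apply ENNReal.toReal_mono (measure_ne_top _ _)
    exact measure_mono hsub
  have h2 : ε * (P {y : Fin d → ℝ | ε ≤ Real.exp ((dotp u y)^2/t^2)}).toReal ≤ 2 :=
    le_trans hmarkov hmgf
  have h3 : (P {y : Fin d → ℝ | ε ≤ Real.exp ((dotp u y)^2/t^2)}).toReal ≤ 2 / ε := by
    rw [le_div_iff₀ hε0]; linarith
  refine le_trans h1 (h3.trans ?_)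
  rw [hε_def, Real.exp_neg]
  rw [div_eq_mul_inv]

lemma pi_integral_prod {X : Type*} [MeasurableSpace X] (P : Measure X) [IsProbabilityMeasure P]
    (n : ℕ) (f : X → ℝ) :
    ∫ x : Fin n → X, ∏ i, f (x i) ∂(Measure.pi fun _ => P) = (∫ y, f y ∂P) ^ n := by
  letI : MeasureSpace X := ⟨P⟩
  haveI : SigmaFinite (volume : Measure X) := inferInstanceAs (SigmaFinite P)
  have h := MeasureTheory.integral_fintype_prod_eq_pow (ι := Fin n) f (μ := P)
  rw [Fintype.card_fin] at h
  exact h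

lemma eNorm_const_mul {m : ℕ} (c : ℝ) (hc : 0 ≤ c) (a : Fin m → ℝ) :
    eNorm (fun k => c * a k) = c * eNorm a := by
  rw [eNorm, eNorm]
  have h1 : ∑ j, (c * a j)^2 = c^2 * ∑ j, (a j)^2 := by
    rw [Finset.mul_sum]; exact Finset.sum_congr rfl fun j _ => by ring
  rw [h1, Real.sqrt_mul (sq_nonneg c), Real.sqrt_sq hc]

lemma dotp_const_mul {m : ℕ} (c : ℝ) (a b : Fin m → ℝ) :
    dotp (fun k => c * a k) b = c * dotp a b := by
  rw [dotp, dotp, Finset.mul_sum]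
  exact Finset.sum_congr rfl fun j _ => by ring

lemma chernoff {d n : ℕ} {P : Measure (Fin d → ℝ)} {K : ℝ} (hDA : DataAssumption P K)
    (hd : 1 ≤ d) (v : Fin d → ℝ) (hv : eNorm v = 1) {t : ℝ} (ht0 : 0 < t) (hKt : K < t)
    (θ : ℝ) :
    (Measure.pi fun _ : Fin n => P)
      ({x | ∀ i, eNorm (x i) = Real.sqrt d} ∩ {x | θ < ∑ i, (dotp v (x i))^2})
      ≤ ENNReal.ofReal (2^n * Real.exp (-(θ / t^2))) := by
  haveI := hDA.prob
  haveI : IsProbabilityMeasure (Measure.pi fun _ : Fin n => P) := by infer_instance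
  set μ := Measure.pi fun _ : Fin n => P with hμ
  set q : (Fin d → ℝ) → ℝ := fun y => Real.exp (min ((dotp v y)^2) (d:ℝ) / t^2) with hq_def
  have hqmeas : Measurable q :=
    ((((measurable_dotp v).pow_const 2).min measurable_const).div_const _).exp
  have hq2 : ∫ y, q y ∂P ≤ 2 := by
    have hcongr : ∫ y, q y ∂P = ∫ y, Real.exp ((dotp v y)^2 / t^2) ∂P := by
      refine integral_congr_ae ?_
      filter_upwards [cs_sq_ae hDA v hv] with y hy
      rw [hq_def]
      simp only [min_eq_left hy]
    rw [hcongr]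
    exact mgf_bound hd hDA v hv hKt ht0
  have hq0 : 0 ≤ ∫ y, q y ∂P := integral_nonneg fun y => Real.exp_nonneg _
  set f : (Fin n → Fin d → ℝ) → ℝ := fun x => ∏ i, q (x i) with hf_def
  have hfmeas : Measurable f :=
    Finset.measurable_prod _ fun i _ => hqmeas.comp (measurable_pi_apply i)
  have hfnonneg : ∀ x, 0 ≤ f x := fun x => Finset.prod_nonneg fun i _ => Real.exp_nonneg _
  have hfbd : ∀ x, |f x| ≤ (Real.exp ((d:ℝ)/t^2))^n := by
    intro x
    rw [abs_of_nonneg (hfnonneg x), hf_def]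
    calc ∏ i, q (x i) ≤ ∏ _i : Fin n, Real.exp ((d:ℝ)/t^2) := by
          refine Finset.prod_le_prod (fun i _ => Real.exp_nonneg _) fun i _ => ?_
          rw [hq_def]
          apply Real.exp_le_exp.mpr
          apply div_le_div_of_nonneg_right (min_le_right _ _) (by positivity)
      _ = (Real.exp ((d:ℝ)/t^2))^n := by rw [Finset.prod_const, Finset.card_univ, Fintype.card_fin]
  have hfint : Integrable f μ :=
    integrable_of_bounded μ f hfmeas _ (Filter.Eventually.of_forall hfbd)
  have hintf : ∫ x, f x ∂μ ≤ 2^n := by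
    rw [hf_def, hμ, pi_integral_prod P n q]
    exact pow_le_pow_left₀ hq0 hq2 n
  set ε := Real.exp (θ/t^2) with hε_def
  have hε0 : 0 < ε := Real.exp_pos _
  have hsub : {x : Fin n → Fin d → ℝ | ∀ i, eNorm (x i) = Real.sqrt d}
      ∩ {x | θ < ∑ i, (dotp v (x i))^2} ⊆ {x | ε ≤ f x} := by
    rintro x ⟨hx1, hx2⟩
    simp only [Set.mem_setOf_eq] at hx1 hx2 ⊢
    have hmin : ∀ i, min ((dotp v (x i))^2) (d:ℝ) = (dotp v (x i))^2 := by
      intro i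
      refine min_eq_left ?_
      have h1 : |dotp v (x i)| ≤ Real.sqrt d := by
        calc |dotp v (x i)| ≤ eNorm v * eNorm (x i) := abs_dotp_le _ _
          _ = Real.sqrt d := by rw [hv, hx1 i, one_mul]
      calc (dotp v (x i))^2 = |dotp v (x i)|^2 := (sq_abs _).symm
        _ ≤ (Real.sqrt d)^2 := pow_le_pow_left₀ (abs_nonneg _) h1 2
        _ = (d:ℝ) := Real.sq_sqrt (Nat.cast_nonneg d)
    have hfx : f x = Real.exp ((∑ i, (dotp v (x i))^2) / t^2) := by
      have hqx : ∀ i : Fin n, q (x i) = Real.exp ((dotp v (x i))^2 / t^2) := by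
        intro i; rw [hq_def]; simp only [hmin i]
      calc f x = ∏ i, q (x i) := rfl
        _ = ∏ i, Real.exp ((dotp v (x i))^2 / t^2) :=
            Finset.prod_congr rfl fun i _ => hqx i
        _ = Real.exp (∑ i, (dotp v (x i))^2 / t^2) := (Real.exp_sum _ _).symm
        _ = Real.exp ((∑ i, (dotp v (x i))^2) / t^2) := by rw [← Finset.sum_div]
    rw [hfx, hε_def]
    apply Real.exp_le_exp.mpr
    apply div_le_div_of_nonneg_right hx2.le (by positivity)
  have hmarkov := mul_meas_ge_le_integral_of_nonneg
    (Filter.Eventually.of_forall hfnonneg) hfint ε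
  have h2 : ε * (μ {x | ε ≤ f x}).toReal ≤ 2^n := le_trans hmarkov hintf
  have h3 : (μ ({x | ∀ i, eNorm (x i) = Real.sqrt d} ∩ {x | θ < ∑ i, (dotp v (x i))^2})).toReal
      ≤ 2^n / ε := by
    have h4 : (μ ({x | ∀ i, eNorm (x i) = Real.sqrt d}
        ∩ {x | θ < ∑ i, (dotp v (x i))^2})).toReal ≤ (μ {x | ε ≤ f x}).toReal :=
      ENNReal.toReal_mono (measure_ne_top _ _) (measure_mono hsub)
    rw [le_div_iff₀ hε0]
    calc (μ ({x | ∀ i, eNorm (x i) = Real.sqrt d}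
          ∩ {x | θ < ∑ i, (dotp v (x i))^2})).toReal * ε
        ≤ (μ {x | ε ≤ f x}).toReal * ε := by
          exact mul_le_mul_of_nonneg_right h4 hε0.le
      _ ≤ 2^n := by rw [mul_comm]; exact h2
  rw [ENNReal.le_ofReal_iff_toReal_le (measure_ne_top _ _) (by positivity)]
  refine h3.trans ?_
  rw [hε_def, Real.exp_neg, div_eq_mul_inv]

lemma pair_map {X : Type*} [MeasurableSpace X] (P : Measure X) [IsProbabilityMeasure P]
    {n : ℕ} (i j : Fin n) (hij : i ≠ j) :
    (Measure.pi fun _ : Fin n => P).map (fun x => (x i, x j)) = P.prod P := by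
  refine (Measure.prod_eq ?_).symm
  intro s t hs ht
  rw [Measure.map_apply ((measurable_pi_apply i).prodMk (measurable_pi_apply j)) (hs.prod ht)]
  have hset : (fun x : Fin n → X => (x i, x j)) ⁻¹' (s ×ˢ t)
      = Set.pi Set.univ (Function.update (Function.update (fun _ => Set.univ) i s) j t) := by
    ext x
    simp only [Set.mem_preimage, Set.mem_prod, Set.mem_pi, Set.mem_univ, true_implies]
    constructor
    · rintro ⟨h1, h2⟩ k
      rcases eq_or_ne k j with rfl | hkj
      · rw [Function.update_self]; exact h2
      · rw [Function.update_of_ne hkj]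
        rcases eq_or_ne k i with rfl | hki
        · rw [Function.update_self]; exact h1
        · rw [Function.update_of_ne hki]; trivial
    · intro h
      constructor
      · have h1 := h i
        rwa [Function.update_of_ne hij, Function.update_self] at h1
      · have h2 := h j
        rwa [Function.update_self] at h2
  rw [hset, Measure.pi_pi]
  have hout : ∀ k ∈ Finset.univ, k ∉ ({i, j} : Finset (Fin n)) →
      P (Function.update (Function.update (fun _ => Set.univ) i s) j t k) = 1 := by
    intro k _ hk
    simp only [Finset.mem_insert, Finset.mem_singleton, not_or] at hk
    rw [Function.update_of_ne hk.2, Function.update_of_ne hk.1]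
    exact measure_univ
  rw [← Finset.prod_subset (Finset.subset_univ ({i, j} : Finset (Fin n))) hout,
    Finset.prod_pair hij, Function.update_of_ne hij, Function.update_self,
    Function.update_self]

lemma pair_tail {d n : ℕ} {P : Measure (Fin d → ℝ)} {K : ℝ} (hDA : DataAssumption P K)
    (hd : 1 ≤ d) {t : ℝ} (ht0 : 0 < t) (hKt : K < t) (r : ℝ) (hr : 0 ≤ r)
    (i j : Fin n) (hij : i ≠ j) :
    (Measure.pi fun _ : Fin n => P) {x | r * Real.sqrt d ≤ |dotp (x i) (x j)|}
      ≤ ENNReal.ofReal (2 * Real.exp (-(r^2 / t^2))) := by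
  haveI := hDA.prob
  have hd0 : (0:ℝ) < (d:ℝ) := by exact_mod_cast hd
  have hsd0 : (0:ℝ) < Real.sqrt d := Real.sqrt_pos.mpr hd0
  have hmeasd : Measurable (fun p : (Fin d → ℝ) × (Fin d → ℝ) => dotp p.1 p.2) := by
    have : (fun p : (Fin d → ℝ) × (Fin d → ℝ) => dotp p.1 p.2)
        = fun p => ∑ k, p.1 k * p.2 k := by funext p; rfl
    rw [this]
    exact Finset.measurable_sum _ fun k _ =>
      ((measurable_pi_apply k).comp measurable_fst).mul
        ((measurable_pi_apply k).comp measurable_snd)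
  have hE' : MeasurableSet {p : (Fin d → ℝ) × (Fin d → ℝ) | r * Real.sqrt d ≤ |dotp p.1 p.2|} :=
    measurableSet_le measurable_const hmeasd.abs
  have hpre : {x : Fin n → Fin d → ℝ | r * Real.sqrt d ≤ |dotp (x i) (x j)|}
      = (fun x : Fin n → Fin d → ℝ => (x i, x j)) ⁻¹'
        {p : (Fin d → ℝ) × (Fin d → ℝ) | r * Real.sqrt d ≤ |dotp p.1 p.2|} := rfl
  rw [hpre, ← Measure.map_apply ((measurable_pi_apply i).prodMk (measurable_pi_apply j)) hE',
    pair_map P i j hij, Measure.prod_apply hE']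
  have hbound : ∀ᵐ a ∂P, P (Prod.mk a ⁻¹'
      {p : (Fin d → ℝ) × (Fin d → ℝ) | r * Real.sqrt d ≤ |dotp p.1 p.2|})
      ≤ ENNReal.ofReal (2 * Real.exp (-(r^2 / t^2))) := by
    filter_upwards [hDA.norm_eq] with a ha
    set u : Fin d → ℝ := fun k => (Real.sqrt d)⁻¹ * a k with hu_def
    have hu : eNorm u = 1 := by
      rw [hu_def, eNorm_const_mul _ (by positivity), ha, inv_mul_cancel₀ hsd0.ne']
    have hslice : Prod.mk a ⁻¹'
        {p : (Fin d → ℝ) × (Fin d → ℝ) | r * Real.sqrt d ≤ |dotp p.1 p.2|}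
        = {b : Fin d → ℝ | r ≤ |dotp u b|} := by
      ext b
      simp only [Set.mem_preimage, Set.mem_setOf_eq]
      rw [hu_def, dotp_const_mul, abs_mul, abs_of_nonneg (by positivity : (0:ℝ) ≤ (Real.sqrt d)⁻¹)]
      rw [le_inv_mul_iff₀ hsd0, mul_comm]
    rw [hslice]
    exact tail_bound u t r ht0 hr (integrable_expsq hDA u hu t ht0.ne')
      (mgf_bound hd hDA u hu hKt ht0)
  calc ∫⁻ a, P (Prod.mk a ⁻¹'
        {p : (Fin d → ℝ) × (Fin d → ℝ) | r * Real.sqrt d ≤ |dotp p.1 p.2|}) ∂P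
      ≤ ∫⁻ _a, ENNReal.ofReal (2 * Real.exp (-(r^2 / t^2))) ∂P := lintegral_mono_ae hbound
    _ = ENNReal.ofReal (2 * Real.exp (-(r^2 / t^2))) := by
        rw [lintegral_const, measure_univ, mul_one]

def fromE {m : ℕ} (v : E m) : Fin m → ℝ := WithLp.equiv 2 (Fin m → ℝ) v

@[simp] lemma fromE_toE {m : ℕ} (y : Fin m → ℝ) : fromE (toE y) = y := rfl
@[simp] lemma toE_fromE {m : ℕ} (v : E m) : toE (fromE v) = v := rfl

lemma eNorm_fromE {m : ℕ} (v : E m) : eNorm (fromE v) = ‖v‖ := by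
  rw [eNorm_eq, toE_fromE]

lemma dotp_comm {m : ℕ} (a b : Fin m → ℝ) : dotp a b = dotp b a := by
  rw [dotp, dotp]; exact Finset.sum_congr rfl fun j _ => mul_comm _ _

lemma dotp_add_right {m : ℕ} (a b c : Fin m → ℝ) :
    dotp a (b + c) = dotp a b + dotp a c := by
  rw [dotp, dotp, dotp, ← Finset.sum_add_distrib]
  exact Finset.sum_congr rfl fun j _ => by simp [Pi.add_apply]; ring

lemma dotp_smul_right {m : ℕ} (c : ℝ) (a b : Fin m → ℝ) :
    dotp a (c • b) = c * dotp a b := by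
  rw [dotp, dotp, Finset.mul_sum]
  exact Finset.sum_congr rfl fun j _ => by simp [Pi.smul_apply, smul_eq_mul]; ring

def Lmap {d n : ℕ} (x : Fin n → Fin d → ℝ) : E d →ₗ[ℝ] E n where
  toFun w := toE (fun i => dotp (x i) (fromE w))
  map_add' w w' := by
    refine PiLp.ext fun i => ?_
    have h1 : fromE (w + w') = fromE w + fromE w' := rfl
    show dotp (x i) (fromE (w + w')) = toE ((fun i => dotp (x i) (fromE w))
      + (fun i => dotp (x i) (fromE w'))) i
    rw [h1, dotp_add_right]
    rfl
  map_smul' c w := by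
    refine PiLp.ext fun i => ?_
    have h1 : fromE (c • w) = c • fromE w := rfl
    show dotp (x i) (fromE (c • w)) = (c • toE (fun i => dotp (x i) (fromE w))) i
    rw [h1, dotp_smul_right]
    rfl

lemma op_bound {d n : ℕ} (x : Fin n → Fin d → ℝ) (B2 : ℝ) (hB2 : 0 ≤ B2)
    (N : Finset (E d)) (hNcov : ∀ u : E d, ‖u‖ = 1 → ∃ v ∈ N, dist u v ≤ 1/2)
    (hNb : ∀ v ∈ N, ∑ i, (dotp (fromE v) (x i))^2 ≤ B2 * d) :
    ∀ xh : Fin d → ℝ, eNorm xh = Real.sqrt d →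
      ∑ i, (dotp (x i) xh)^2 ≤ (4*B2) * (d:ℝ)^2 := by
  set L : E d →L[ℝ] E n := LinearMap.toContinuousLinearMap (Lmap x) with hL_def
  have hLapp : ∀ w : E d, L w = toE (fun i => dotp (x i) (fromE w)) := fun w => rfl
  have hLnorm : ∀ w : E d, ‖L w‖^2 = ∑ i, (dotp (x i) (fromE w))^2 := by
    intro w
    rw [hLapp]
    rw [← eNorm_eq, eNorm]
    rw [Real.sq_sqrt (Finset.sum_nonneg fun i _ => sq_nonneg _)]
  set b : ℝ := Real.sqrt (B2 * d) with hb_def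
  have hb0 : 0 ≤ b := Real.sqrt_nonneg _
  have hNb' : ∀ v ∈ N, ‖L v‖ ≤ b := by
    intro v hv
    have h1 : ‖L v‖^2 ≤ B2 * d := by
      rw [hLnorm]
      calc ∑ i, (dotp (x i) (fromE v))^2 = ∑ i, (dotp (fromE v) (x i))^2 :=
            Finset.sum_congr rfl fun i _ => by rw [dotp_comm]
        _ ≤ B2 * d := hNb v hv
    calc ‖L v‖ = Real.sqrt (‖L v‖^2) := (Real.sqrt_sq (norm_nonneg _)).symm
      _ ≤ b := Real.sqrt_le_sqrt h1
  have hopn : ‖L‖ ≤ 2 * b := opnorm_of_net L N b hb0 hNcov hNb'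
  intro xh hxh
  have hw : ‖toE xh‖ = Real.sqrt d := by rw [← eNorm_eq]; exact hxh
  have h2 : ‖L (toE xh)‖ ≤ 2 * b * Real.sqrt d := by
    calc ‖L (toE xh)‖ ≤ ‖L‖ * ‖toE xh‖ := L.le_opNorm _
      _ ≤ 2 * b * Real.sqrt d := by
          rw [hw]
          exact mul_le_mul_of_nonneg_right hopn (Real.sqrt_nonneg _)
  have h3 : ∑ i, (dotp (x i) xh)^2 = ‖L (toE xh)‖^2 := by
    rw [hLnorm]
    exact Finset.sum_congr rfl fun i _ => by rw [fromE_toE]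
  rw [h3]
  calc ‖L (toE xh)‖^2 ≤ (2 * b * Real.sqrt d)^2 := by
        have := norm_nonneg (L (toE xh))
        nlinarith
    _ = 4 * b^2 * (Real.sqrt d)^2 := by ring
    _ = (4*B2) * (d:ℝ)^2 := by
        rw [hb_def, Real.sq_sqrt (by positivity : (0:ℝ) ≤ B2 * d),
          Real.sq_sqrt (Nat.cast_nonneg d)]
        ring

lemma coord_null {d n : ℕ} {P : Measure (Fin d → ℝ)} {K : ℝ} (hDA : DataAssumption P K)
    (i : Fin n) :
    (Measure.pi fun _ : Fin n => P) {x | ¬ (eNorm (x i) = Real.sqrt d)} = 0 := by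
  haveI := hDA.prob
  have hN0 : P {y : Fin d → ℝ | ¬ (eNorm y = Real.sqrt d)} = 0 := by
    have h := hDA.norm_eq; rw [ae_iff] at h; exact h
  have hset : {x : Fin n → Fin d → ℝ | ¬ (eNorm (x i) = Real.sqrt d)}
      = Set.pi Set.univ (Function.update (fun _ => Set.univ) i
          {y : Fin d → ℝ | ¬ (eNorm y = Real.sqrt d)}) := by
    ext x
    simp only [Set.mem_setOf_eq, Set.mem_pi, Set.mem_univ, true_implies]
    constructor
    · intro h k
      rcases eq_or_ne k i with rfl | hk
      · rw [Function.update_self]; exact h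
      · rw [Function.update_of_ne hk]; trivial
    · intro h
      have h1 := h i; rwa [Function.update_self] at h1
  rw [hset, Measure.pi_pi]
  refine Finset.prod_eq_zero (Finset.mem_univ i) ?_
  rw [Function.update_self]; exact hN0

lemma exp_fifth (x : ℝ) (hx : 0 ≤ x) : x^5 / 3125 ≤ Real.exp x := by
  have h1 : Real.exp x = (Real.exp (x/5))^5 := by
    rw [← Real.exp_nat_mul]
    norm_num
    ring
  have h2 : x/5 ≤ Real.exp (x/5) := by
    have := Real.add_one_le_exp (x/5)
    linarith
  have h3 : (x/5)^5 ≤ (Real.exp (x/5))^5 := pow_le_pow_left₀ (by linarith) h2 5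
  rw [h1]
  calc x^5/3125 = (x/5)^5 := by ring
    _ ≤ (Real.exp (x/5))^5 := h3

end HPCB

set_option maxHeartbeats 2000000 in
open HPCB in
/-- **Lemma A.4 (Bound on Hadamard powers of correlations with the data).**
Under the data assumption with `n ≤ C₀ d`: there are constants `c, C > 0` such that for all
sufficiently large `d`, with probability at least `1 − 2 exp(−c √d)` over the data,
simultaneously for every `x̂` with `‖x̂‖₂ = √d` and every `l ≥ 2`:
`‖(X x̂)^{∘l} / d^l‖₂ ≤ C₁^{l−1} + C d^{−0.1}`, where `C₁ = maxᵢ |xᵢᵀx̂| / d`. -/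
theorem hadamard_power_correlation_bound (K C₀ : ℝ) :
    ∃ c : ℝ, 0 < c ∧ ∃ C : ℝ, 0 < C ∧ ∃ D : ℕ, ∀ d : ℕ, D ≤ d →
      ∀ n : ℕ, (n : ℝ) ≤ C₀ * d →
        ∀ P : Measure (Fin d → ℝ), DataAssumption P K →
          1 - ENNReal.ofReal (2 * Real.exp (-c * Real.sqrt d)) ≤
            (Measure.pi fun _ : Fin n => P)
              {x | ∀ xh : Fin d → ℝ, eNorm xh = Real.sqrt d → ∀ l : ℕ, 2 ≤ l →
                eNorm (fun i : Fin n => (dotp (x i) xh) ^ l / (d : ℝ) ^ l) ≤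
                  (⨆ i : Fin n, |dotp (x i) xh| / (d : ℝ)) ^ (l - 1) +
                    C * (d : ℝ) ^ (-(0.1 : ℝ))} := by
  classical
  set t : ℝ := |K| + 1 with ht_def
  have ht0 : (0:ℝ) < t := by positivity
  have ht1 : (1:ℝ) ≤ t := le_add_of_nonneg_left (abs_nonneg K)
  have hKt : K < t := lt_of_le_of_lt (le_abs_self K) (by rw [ht_def]; linarith)
  set C0p : ℝ := max C₀ 0 with hC0p_def
  have hC0p : 0 ≤ C0p := le_max_right _ _
  set B2 : ℝ := t^2 * (C0p + 5) with hB2_def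
  have hB2pos : 0 < B2 := by positivity
  set K₂ : ℝ := 2 * t with hK₂_def
  have hK₂1 : 1 ≤ K₂ := by rw [hK₂_def]; linarith
  refine ⟨1, one_pos, (4*B2) * (K₂ + 1), by positivity, ⌈(64*(C0p^2+1))^2⌉₊ + 1, ?_⟩
  intro d hD n hn P hDA
  haveI := hDA.prob
  haveI : IsProbabilityMeasure (Measure.pi fun _ : Fin n => P) := inferInstance
  set μ := Measure.pi fun _ : Fin n => P with hμ_def
  have hd1 : 1 ≤ d := le_trans (Nat.le_add_left 1 _) hD
  have hdR : (1:ℝ) ≤ (d:ℕ) := by exact_mod_cast hd1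
  have hd0 : (0:ℝ) < (d:ℝ) := lt_of_lt_of_le one_pos hdR
  have hdge : (64*(C0p^2+1))^2 ≤ (d:ℝ) := by
    calc (64*(C0p^2+1))^2 ≤ (⌈(64*(C0p^2+1))^2⌉₊ : ℝ) := Nat.le_ceil _
      _ ≤ (d:ℝ) := by
          have : (⌈(64*(C0p^2+1))^2⌉₊ : ℕ) ≤ d := le_trans (Nat.le_succ _) hD
          exact_mod_cast this
  set s : ℝ := Real.sqrt d with hs_def
  have hs0 : 0 < s := Real.sqrt_pos.mpr hd0
  have hsd : 64*(C0p^2+1) ≤ s := by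
    rw [hs_def]
    have h := Real.sqrt_le_sqrt hdge
    rwa [Real.sqrt_sq (by positivity)] at h
  have hs1 : 1 ≤ s := by nlinarith
  have hss : s^2 = (d:ℝ) := Real.sq_sqrt hd0.le
  have hsled : s ≤ (d:ℝ) := by nlinarith
  have hnC : (n:ℝ) ≤ C0p * d :=
    le_trans hn (mul_le_mul_of_nonneg_right (le_max_left _ _) hd0.le)
  have hn0 : (0:ℝ) ≤ (n:ℝ) := Nat.cast_nonneg n
  obtain ⟨N, hNcard, hNnorm, hNcov⟩ := exists_net d hd1
  set ρ : ℝ := K₂ * (d:ℝ)^((3:ℝ)/4) with hρ_def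
  set r : ℝ := K₂ * (d:ℝ)^((1:ℝ)/4) with hr_def
  have hr0 : 0 ≤ r := by
    have : (0:ℝ) < (d:ℝ)^((1:ℝ)/4) := Real.rpow_pos_of_pos hd0 _
    nlinarith
  have hρr : r * s = ρ := by
    rw [hr_def, hρ_def, hs_def, Real.sqrt_eq_rpow, mul_assoc, ← Real.rpow_add hd0]
    norm_num
  have hr2 : r^2 / t^2 = 4 * s := by
    have h1 : ((d:ℝ)^((1:ℝ)/4))^2 = s := by
      rw [hs_def, Real.sqrt_eq_rpow, ← Real.rpow_natCast ((d:ℝ)^((1:ℝ)/4)) 2,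
        ← Real.rpow_mul hd0.le]
      norm_num
    rw [hr_def, mul_pow, h1, hK₂_def]
    field_simp
    ring
  -- events
  set A := {x : Fin n → Fin d → ℝ | ∀ i, eNorm (x i) = Real.sqrt d} with hA_def
  set Bev := {x : Fin n → Fin d → ℝ | ∀ v ∈ N, ∑ i, (dotp (fromE v) (x i))^2 ≤ B2 * d}
    with hBev_def
  set Cev := {x : Fin n → Fin d → ℝ | ∀ i j : Fin n, i ≠ j → |dotp (x i) (x j)| ≤ ρ}
    with hCev_def
  -- good event implies the conclusion
  have hsubset : A ∩ (Bev ∩ Cev) ⊆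
      {x : Fin n → Fin d → ℝ | ∀ xh : Fin d → ℝ, eNorm xh = Real.sqrt d → ∀ l : ℕ, 2 ≤ l →
        eNorm (fun i : Fin n => (dotp (x i) xh) ^ l / (d : ℝ) ^ l) ≤
          (⨆ i : Fin n, |dotp (x i) xh| / (d : ℝ)) ^ (l - 1) +
            (4*B2) * (K₂ + 1) * (d : ℝ) ^ (-(0.1 : ℝ))} := by
    rintro x ⟨hxA, hxB, hxC⟩
    intro xh hxh l hl
    have hop := op_bound x B2 hB2pos.le N hNcov hxB
    have hpair : ∀ i j, i ≠ j → |dotp (x i) (x j)| ≤ K₂ * (d:ℝ)^((3:ℝ)/4) := by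
      intro i j hij
      exact hxC i j hij
    have hdet := det_bound hdR (4*B2) K₂ (by positivity) hK₂1 x hxA hpair hop xh hxh l hl
    exact hdet
  -- failure probability
  have hcompl : (A ∩ (Bev ∩ Cev))ᶜ ⊆ Aᶜ ∪ ((A ∩ Bevᶜ) ∪ Cevᶜ) := by
    intro x hx
    by_cases hA : x ∈ A
    · by_cases hB : x ∈ Bev
      · by_cases hC : x ∈ Cev
        · exact absurd ⟨hA, hB, hC⟩ hx
        · exact Or.inr (Or.inr hC)
      · exact Or.inr (Or.inl ⟨hA, hB⟩)
    · exact Or.inl hA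
  have hμA : μ Aᶜ = 0 := by
    have hsub2 : Aᶜ ⊆ ⋃ i : Fin n, {x : Fin n → Fin d → ℝ | ¬ (eNorm (x i) = Real.sqrt d)} := by
      intro x hx
      rw [hA_def] at hx
      simp only [Set.mem_compl_iff, Set.mem_setOf_eq, not_forall] at hx
      obtain ⟨i, hi⟩ := hx
      exact Set.mem_iUnion.mpr ⟨i, hi⟩
    have h0 : μ (⋃ i : Fin n, {x : Fin n → Fin d → ℝ | ¬ (eNorm (x i) = Real.sqrt d)}) = 0 :=
      measure_iUnion_null fun i => coord_null hDA i
    exact le_antisymm (h0 ▸ measure_mono hsub2) zero_le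
  -- Chernoff part
  have hμB : μ (A ∩ Bevᶜ) ≤ ENNReal.ofReal (Real.exp (-s)) := by
    have hsub3 : A ∩ Bevᶜ ⊆ ⋃ v ∈ N,
        (A ∩ {x : Fin n → Fin d → ℝ | B2 * d < ∑ i, (dotp (fromE v) (x i))^2}) := by
      rintro x ⟨hxA, hxB⟩
      rw [hBev_def] at hxB
      simp only [Set.mem_compl_iff, Set.mem_setOf_eq, not_forall] at hxB
      obtain ⟨v, hvN, hv⟩ := hxB
      exact Set.mem_biUnion hvN ⟨hxA, not_le.mp hv⟩
    have hbd : ∀ v ∈ N, μ (A ∩ {x : Fin n → Fin d → ℝ | B2 * d < ∑ i, (dotp (fromE v) (x i))^2})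
        ≤ ENNReal.ofReal (2^n * Real.exp (-(B2 * d / t^2))) := by
      intro v hv
      have hev : eNorm (fromE v) = 1 := by rw [eNorm_fromE, hNnorm v hv]
      exact chernoff hDA hd1 (fromE v) hev ht0 hKt (B2 * d)
    calc μ (A ∩ Bevᶜ) ≤ μ (⋃ v ∈ N,
          (A ∩ {x : Fin n → Fin d → ℝ | B2 * d < ∑ i, (dotp (fromE v) (x i))^2})) :=
          measure_mono hsub3
      _ ≤ ∑ v ∈ N, μ (A ∩ {x : Fin n → Fin d → ℝ | B2 * d < ∑ i, (dotp (fromE v) (x i))^2}) :=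
          measure_biUnion_finset_le _ _
      _ ≤ ∑ _v ∈ N, ENNReal.ofReal (2^n * Real.exp (-(B2 * d / t^2))) :=
          Finset.sum_le_sum hbd
      _ = (N.card : ℝ≥0∞) * ENNReal.ofReal (2^n * Real.exp (-(B2 * d / t^2))) := by
          rw [Finset.sum_const, nsmul_eq_mul]
      _ ≤ ((5^d : ℕ) : ℝ≥0∞) * ENNReal.ofReal (2^n * Real.exp (-(B2 * d / t^2))) := by
          apply mul_le_mul_left
          exact_mod_cast hNcard
      _ = ENNReal.ofReal ((5:ℝ)^d * (2^n * Real.exp (-(B2 * d / t^2)))) := by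
          rw [← ENNReal.ofReal_natCast, ← ENNReal.ofReal_mul (by positivity)]
          congr 2
          push_cast
          ring
      _ ≤ ENNReal.ofReal (Real.exp (-s)) := by
          apply ENNReal.ofReal_le_ofReal
          -- numeric inequality
          have h5e : (5:ℝ) ≤ Real.exp 2 := by
            have h := Real.exp_one_gt_d9
            have h2 : Real.exp 2 = Real.exp 1 * Real.exp 1 := by
              rw [← Real.exp_add]; norm_num
            nlinarith
          have e5 : (5:ℝ)^d ≤ Real.exp (2*d) := by
            calc (5:ℝ)^d ≤ (Real.exp 2)^d := pow_le_pow_left₀ (by norm_num) h5e d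
              _ = Real.exp (2*d) := by rw [← Real.exp_nat_mul]; ring_nf
          have e2 : (2:ℝ)^n ≤ Real.exp (C0p * d) := by
            have h2e : (2:ℝ) ≤ Real.exp 1 := by
              have := Real.add_one_le_exp (1:ℝ); linarith
            calc (2:ℝ)^n ≤ (Real.exp 1)^n := pow_le_pow_left₀ (by norm_num) h2e n
              _ = Real.exp n := by rw [← Real.exp_nat_mul]; ring_nf
              _ ≤ Real.exp (C0p * d) := Real.exp_le_exp.mpr hnC
          have hBt : B2 * d / t^2 = (C0p + 5) * d := by
            rw [hB2_def]; field_simp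
          calc (5:ℝ)^d * (2^n * Real.exp (-(B2 * d / t^2)))
              ≤ Real.exp (2*d) * (Real.exp (C0p * d) * Real.exp (-(B2 * d / t^2))) := by
                have hp1 : (0:ℝ) ≤ Real.exp (-(B2 * d / t^2)) := Real.exp_nonneg _
                have hp2 : (0:ℝ) ≤ (2:ℝ)^n := by positivity
                have hp3 : (0:ℝ) ≤ (5:ℝ)^d := by positivity
                apply mul_le_mul e5 (mul_le_mul_of_nonneg_right e2 hp1) (by positivity)
                  (Real.exp_nonneg _)
            _ = Real.exp (2*d + C0p * d - (C0p + 5) * d) := by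
                rw [← Real.exp_add, ← Real.exp_add, hBt]
                ring_nf
            _ = Real.exp (-(3*d)) := by ring_nf
            _ ≤ Real.exp (-s) := by
                apply Real.exp_le_exp.mpr
                nlinarith
  -- pairwise part
  have hμC : μ Cevᶜ ≤ ENNReal.ofReal (Real.exp (-s)) := by
    set T : Fin n → Fin n → Set (Fin n → Fin d → ℝ) :=
      fun i j => {x | i ≠ j ∧ r * Real.sqrt d ≤ |dotp (x i) (x j)|} with hT_def
    have hsub4 : Cevᶜ ⊆ ⋃ i, ⋃ j, T i j := by
      intro x hx
      rw [hCev_def] at hx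
      simp only [Set.mem_compl_iff, Set.mem_setOf_eq, not_forall] at hx
      obtain ⟨i, j, hij, hgt⟩ := hx
      refine Set.mem_iUnion.mpr ⟨i, Set.mem_iUnion.mpr ⟨j, ?_⟩⟩
      rw [hT_def]
      refine ⟨hij, ?_⟩
      rw [hρr]
      exact (not_le.mp hgt).le
    have hTbd : ∀ i j, μ (T i j) ≤ ENNReal.ofReal (2 * Real.exp (-(4*s))) := by
      intro i j
      rcases eq_or_ne i j with rfl | hij
      · have : T i i = ∅ := by
          rw [hT_def]; ext x; simp
        rw [this, measure_empty]
        exact zero_le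
      · have hsub5 : T i j ⊆ {x : Fin n → Fin d → ℝ | r * Real.sqrt d ≤ |dotp (x i) (x j)|} :=
          fun x hx => hx.2
        calc μ (T i j) ≤ μ {x : Fin n → Fin d → ℝ | r * Real.sqrt d ≤ |dotp (x i) (x j)|} :=
              measure_mono hsub5
          _ ≤ ENNReal.ofReal (2 * Real.exp (-(r^2 / t^2))) :=
              pair_tail hDA hd1 ht0 hKt r hr0 i j hij
          _ = ENNReal.ofReal (2 * Real.exp (-(4*s))) := by rw [hr2]
    calc μ Cevᶜ ≤ μ (⋃ i, ⋃ j, T i j) := measure_mono hsub4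
      _ ≤ ∑' i : Fin n, μ (⋃ j, T i j) := measure_iUnion_le _
      _ ≤ ∑' i : Fin n, ∑' j : Fin n, μ (T i j) :=
          ENNReal.tsum_le_tsum fun i => measure_iUnion_le _
      _ = ∑ i : Fin n, ∑ j : Fin n, μ (T i j) := by
          rw [tsum_fintype]
          exact Finset.sum_congr rfl fun i _ => tsum_fintype _
      _ ≤ ∑ _i : Fin n, ∑ _j : Fin n, ENNReal.ofReal (2 * Real.exp (-(4*s))) :=
          Finset.sum_le_sum fun i _ => Finset.sum_le_sum fun j _ => hTbd i j
      _ = (n : ℝ≥0∞) * ((n : ℝ≥0∞) * ENNReal.ofReal (2 * Real.exp (-(4*s)))) := by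
          simp [Finset.sum_const, nsmul_eq_mul, Finset.card_univ]
      _ ≤ ENNReal.ofReal (Real.exp (-s)) := by
          have hcast : (n : ℝ≥0∞) = ENNReal.ofReal (n:ℝ) := by
            rw [ENNReal.ofReal_natCast]
          rw [hcast, ← ENNReal.ofReal_mul hn0, ← ENNReal.ofReal_mul hn0]
          apply ENNReal.ofReal_le_ofReal
          -- numeric: n * (n * (2 exp(-4s))) ≤ exp(-s)
          have hkey : 2 * (C0p*d)^2 ≤ Real.exp (3*s) := by
            have h1 : (3*s)^5 / 3125 ≤ Real.exp (3*s) := exp_fifth _ (by positivity)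
            have h2 : s^5 = s * (d:ℝ)^2 := by
              have : s^5 = s * (s^2)^2 := by ring
              rw [this, hss]
            have h3 : 26 * C0p^2 ≤ s := by nlinarith
            have h4 : 2 * (C0p*d)^2 ≤ (s * (d:ℝ)^2) / 13 := by
              have hd2 : (0:ℝ) ≤ (d:ℝ)^2 := sq_nonneg _
              calc 2 * (C0p*d)^2 = (26 * C0p^2) * (d:ℝ)^2 / 13 := by ring
                _ ≤ s * (d:ℝ)^2 / 13 := by
                    apply div_le_div_of_nonneg_right ?_ (by norm_num)
                    exact mul_le_mul_of_nonneg_right h3 hd2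
            calc 2 * (C0p*d)^2 ≤ (s * (d:ℝ)^2) / 13 := h4
              _ = s^5 / 13 := by rw [h2]
              _ ≤ (3*s)^5 / 3125 := by
                  have h5 : (3*s)^5 = 243 * s^5 := by ring
                  rw [h5]
                  have hs5 : (0:ℝ) ≤ s^5 := by positivity
                  rw [div_le_div_iff₀ (by norm_num) (by norm_num)]
                  nlinarith
              _ ≤ Real.exp (3*s) := h1
          have hnn : (n:ℝ) * ((n:ℝ) * (2 * Real.exp (-(4*s))))
              = 2 * (n:ℝ)^2 * Real.exp (-(4*s)) := by ring
          rw [hnn]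
          have h6 : 2 * (n:ℝ)^2 ≤ 2 * (C0p*d)^2 := by nlinarith
          calc 2 * (n:ℝ)^2 * Real.exp (-(4*s))
              ≤ Real.exp (3*s) * Real.exp (-(4*s)) := by
                apply mul_le_mul_of_nonneg_right (h6.trans hkey) (Real.exp_nonneg _)
            _ = Real.exp (-s) := by rw [← Real.exp_add]; ring_nf
  -- combine
  have hGc : μ (A ∩ (Bev ∩ Cev))ᶜ ≤ ENNReal.ofReal (2 * Real.exp (-(1:ℝ) * Real.sqrt d)) := by
    calc μ (A ∩ (Bev ∩ Cev))ᶜ ≤ μ (Aᶜ ∪ ((A ∩ Bevᶜ) ∪ Cevᶜ)) := measure_mono hcompl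
      _ ≤ μ Aᶜ + μ ((A ∩ Bevᶜ) ∪ Cevᶜ) := measure_union_le _ _
      _ ≤ μ Aᶜ + (μ (A ∩ Bevᶜ) + μ Cevᶜ) := by
          exact add_le_add le_rfl (measure_union_le _ _)
      _ ≤ 0 + (ENNReal.ofReal (Real.exp (-s)) + ENNReal.ofReal (Real.exp (-s))) := by
          exact add_le_add (le_of_eq hμA) (add_le_add hμB hμC)
      _ = ENNReal.ofReal (2 * Real.exp (-(1:ℝ) * Real.sqrt d)) := by
          rw [zero_add, ← ENNReal.ofReal_add (Real.exp_nonneg _) (Real.exp_nonneg _)]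
          congr 1
          rw [hs_def]
          ring
  have hone : (1:ℝ≥0∞) ≤ μ (A ∩ (Bev ∩ Cev)) + μ (A ∩ (Bev ∩ Cev))ᶜ := by
    have h1 : μ Set.univ = 1 := measure_univ
    calc (1:ℝ≥0∞) = μ Set.univ := h1.symm
      _ = μ ((A ∩ (Bev ∩ Cev)) ∪ (A ∩ (Bev ∩ Cev))ᶜ) := by rw [Set.union_compl_self]
      _ ≤ μ (A ∩ (Bev ∩ Cev)) + μ (A ∩ (Bev ∩ Cev))ᶜ := measure_union_le _ _
  calc 1 - ENNReal.ofReal (2 * Real.exp (-(1:ℝ) * Real.sqrt d))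
      ≤ μ (A ∩ (Bev ∩ Cev)) := by
        rw [tsub_le_iff_right]
        calc (1:ℝ≥0∞) ≤ μ (A ∩ (Bev ∩ Cev)) + μ (A ∩ (Bev ∩ Cev))ᶜ := hone
          _ ≤ μ (A ∩ (Bev ∩ Cev)) + ENNReal.ofReal (2 * Real.exp (-(1:ℝ) * Real.sqrt d)) :=
              add_le_add le_rfl hGc
    _ ≤ _ := measure_mono hsubset
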